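/- For every recursive space-filling curve ordering σ of the grid D = {0,…,2^ω−1}² in the sense of Definition 2.1, there exists a recursive space-filling curve map π on D in the sense of Definition 2.3 such that for all i < j one has π(σ(i)) < π(σ(j)) in lexicographic order; i.e. sorting D by π recovers σ. Moreover this π is unique. -/

import Mathlib

/-- The axis-aligned square of grid points with corner `c` and side length `s`. -/
def square (c : ℕ × ℕ) (s : ℕ) : Set (ℕ × ℕ) :=
  {p | c.1 ≤ p.1 ∧ p.1 < c.1 + s ∧ c.2 ≤ p.2 ∧ p.2 < c.2 + s}

/-- The grid `D = {0,…,2^ω−1}²`. -/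
def grid (ω : ℕ) : Set (ℕ × ℕ) := square (0, 0) (2 ^ ω)

/-- A recursive space-filling curve ordering (Definition 2.1) of the grid
`D = {0,…,2^ω−1}²` with `m = 4^ω` points: a bijection `σ : {0,…,m−1} → D` such
that, if `ω ≥ 1`, there exist four pairwise disjoint equal-sized axis-aligned
subsquares `S₁, S₂, S₃, S₄` partitioning `D` with
`σ({j·m/4,…,(j+1)·m/4−1}) = S_{j+1} ∩ D` for `j = 0,1,2,3`, and the restriction of
`σ` to each `S_j`, reindexed and translated back to the origin, is itself a
recursive space-filling curve ordering. -/
def IsRSFCOrdering : ℕ → (ℕ → ℕ × ℕ) → Prop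
  | 0, σ => Set.BijOn σ (Set.Iio (4 ^ 0)) (grid 0)
  | ω + 1, σ =>
      Set.BijOn σ (Set.Iio (4 ^ (ω + 1))) (grid (ω + 1)) ∧
      ∃ (c : Fin 4 → ℕ × ℕ) (s : ℕ),
        (∀ j j' : Fin 4, j ≠ j' → Disjoint (square (c j) s) (square (c j') s)) ∧
        (⋃ j, square (c j) s) = grid (ω + 1) ∧
        (∀ j : Fin 4,
          σ '' Set.Ico (j.1 * 4 ^ ω) ((j.1 + 1) * 4 ^ ω) =
            square (c j) s ∩ grid (ω + 1)) ∧
        (∀ j : Fin 4, IsRSFCOrdering ω fun i =>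
          ((σ (j.1 * 4 ^ ω + i)).1 - (c j).1, (σ (j.1 * 4 ^ ω + i)).2 - (c j).2))

/-- `(a, b)` is the corner of a level-`k` dyadic cell of the grid `{0,…,2^ω−1}²`,
i.e. `a, b < 2^ω` are divisible by `2^k`. -/
def CellCorner (ω k a b : ℕ) : Prop :=
  a < 2 ^ ω ∧ b < 2 ^ ω ∧ 2 ^ k ∣ a ∧ 2 ^ k ∣ b

/-- The level-`k` dyadic cell `{a,…,a+2^k−1} × {b,…,b+2^k−1}` as a set of points. -/
def dyadicCell (k a b : ℕ) : Set (ℕ × ℕ) :=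
  {p | a ≤ p.1 ∧ p.1 < a + 2 ^ k ∧ b ≤ p.2 ∧ p.2 < b + 2 ^ k}

/-- A recursive space-filling curve map (Definition 2.3, `d = 2`) on the grid
`{0,…,2^ω−1}²`: `π ℓ (a, b)` is the bit string assigned to the depth-`ℓ` quadtree
cube (i.e. the level-`(ω−ℓ)` dyadic cell) with corner `(a, b)`; it must have length
`2ℓ`, distinct cubes of the same depth must receive distinct strings, and the string
of a cube must be a prefix of the string of each of its sub-cubes. -/
def IsRSFCMap (ω : ℕ) (π : ℕ → ℕ × ℕ → List Bool) : Prop :=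
  (∀ ℓ, ℓ ≤ ω → ∀ a b, CellCorner ω (ω - ℓ) a b → (π ℓ (a, b)).length = 2 * ℓ) ∧
  (∀ ℓ, ℓ ≤ ω → ∀ a b a' b',
    CellCorner ω (ω - ℓ) a b → CellCorner ω (ω - ℓ) a' b' →
    (a, b) ≠ (a', b') → π ℓ (a, b) ≠ π ℓ (a', b')) ∧
  (∀ ℓ ℓ', ℓ ≤ ℓ' → ℓ' ≤ ω → ∀ a b a' b',
    CellCorner ω (ω - ℓ) a b → CellCorner ω (ω - ℓ') a' b' →
    dyadicCell (ω - ℓ') a' b' ⊆ dyadicCell (ω - ℓ) a b →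
    π ℓ (a, b) <+: π ℓ' (a', b'))

/-- For a grid point `p`, `π(p)` is the string of the unit cell containing `p`,
whose corner is `p` itself, i.e. `π ω p`.  `SortsTo ω π σ` says that sorting the
points of the grid by the lexicographic order of their strings `π(p)` recovers the
ordering `σ`. -/
def SortsTo (ω : ℕ) (π : ℕ → ℕ × ℕ → List Bool) (σ : ℕ → ℕ × ℕ) : Prop :=
  ∀ i j : ℕ, i < j → j < 4 ^ ω → List.Lex (· < ·) (π ω (σ i)) (π ω (σ j))


/-- MSB-first binary representation of `n` with `L` bits. -/
def natBits : ℕ → ℕ → List Bool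
  | 0, _ => []
  | L+1, n => decide (2^L ≤ n) :: natBits L (n % 2^L)

lemma natBits_length (L n : ℕ) : (natBits L n).length = L := by
  induction L generalizing n with
  | zero => rfl
  | succ L ih => simp [natBits, ih]

lemma natBits_lex {L n m : ℕ} (hnm : n < m) (hm : m < 2^L) :
    List.Lex (· < ·) (natBits L n) (natBits L m) := by
  induction L generalizing n m with
  | zero => simp at hm; omega
  | succ L ih =>
    have hL : 0 < 2^L := Nat.pow_pos (by norm_num)
    have hm2 : m < 2 * 2^L := by rw [pow_succ] at hm; omega
    rw [natBits, natBits]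
    by_cases h1 : 2^L ≤ n
    · have h2 : 2^L ≤ m := le_trans h1 (le_of_lt hnm)
      have e1 : n % 2^L = n - 2^L := by
        rw [Nat.mod_eq_sub_mod h1, Nat.mod_eq_of_lt (by omega)]
      have e2 : m % 2^L = m - 2^L := by
        rw [Nat.mod_eq_sub_mod h2, Nat.mod_eq_of_lt (by omega)]
      rw [decide_eq_true h1, decide_eq_true h2, e1, e2]
      exact List.Lex.cons (ih (by omega) (by omega))
    · by_cases h2 : 2^L ≤ m
      · rw [decide_eq_false h1, decide_eq_true h2]
        exact List.Lex.rel (by decide)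
      · rw [decide_eq_false h1, decide_eq_false h2,
          Nat.mod_eq_of_lt (by omega), Nat.mod_eq_of_lt (by omega)]
        exact List.Lex.cons (ih hnm (by omega))

lemma natBits_prefix {L δ n : ℕ} (h : n < 2^(L+δ)) :
    natBits L (n / 2^δ) <+: natBits (L+δ) n := by
  induction L generalizing n with
  | zero => simp [natBits]
  | succ L ih =>
    rw [Nat.add_right_comm L 1 δ]
    rw [natBits, natBits]
    rw [List.cons_prefix_cons]
    constructor
    · rw [decide_eq_decide, Nat.le_div_iff_mul_le (Nat.pow_pos (by norm_num)),
        ← pow_add]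
    · have key : n % 2^(L+δ) / 2^δ = n / 2^δ % 2^L := by
        rw [show (2:ℕ)^(L+δ) = 2^δ * 2^L by rw [← pow_add]; ring_nf]
        exact Nat.mod_mul_right_div_self n (2^δ) (2^L)
      rw [← key]
      exact ih (Nat.mod_lt _ (Nat.pow_pos (by norm_num)))

/-- The value of an MSB-first bit string. -/
def bvVal : List Bool → ℕ
  | [] => 0
  | b :: l => (cond b (2^l.length) 0) + bvVal l

lemma bvVal_lt (l : List Bool) : bvVal l < 2^l.length := by
  induction l with
  | nil => simp [bvVal]
  | cons b t ih => cases b <;> simp [bvVal, pow_succ] <;> omega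

lemma natBits_bvVal (l : List Bool) : natBits l.length (bvVal l) = l := by
  induction l with
  | nil => rfl
  | cons b t ih =>
    have ht := bvVal_lt t
    rw [List.length_cons, natBits]
    cases b
    · have : bvVal (false :: t) = bvVal t := by simp [bvVal]
      rw [this, decide_eq_false (by omega), Nat.mod_eq_of_lt ht, ih]
    · have : bvVal (true :: t) = 2^t.length + bvVal t := by simp [bvVal]
      rw [this, decide_eq_true (by omega), Nat.add_mod_left, Nat.mod_eq_of_lt ht, ih]

lemma bvVal_lt_of_lex {l l' : List Bool} (h : l.length = l'.length)
    (hl : List.Lex (· < ·) l l') : bvVal l < bvVal l' := by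
  induction l generalizing l' with
  | nil => cases hl <;> simp at h
  | cons b t ih =>
    cases hl with
    | rel hr =>
      rename_i b' t'
      have hb : b = false ∧ b' = true := by
        revert hr; cases b <;> cases b' <;> decide
      obtain ⟨rfl, rfl⟩ := hb
      have hlen : t.length = t'.length := by simpa using h
      calc bvVal (false :: t) = bvVal t := by simp [bvVal]
        _ < 2^t.length := bvVal_lt t
        _ = 2^t'.length := by rw [hlen]
        _ ≤ bvVal (true :: t') := by simp [bvVal]
    | cons hl' =>
      rename_i t'
      have hlen : t.length = t'.length := by simpa using h
      have := ih hlen hl'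
      cases b <;> simp [bvVal, hlen] <;> omega

lemma strict_mono_fix {N : ℕ} {v : ℕ → ℕ}
    (hmono : ∀ i j, i < j → j < N → v i < v j)
    (hb : ∀ i, i < N → v i < N) : ∀ i, i < N → v i = i := by
  have step : ∀ i d, i + d < N → v i + d ≤ v (i + d) := by
    intro i d
    induction d with
    | zero => intro _; simp
    | succ d ih =>
      intro h
      have h1 := ih (by omega)
      have h2 := hmono (i+d) (i+d+1) (by omega) (by omega)
      have e : i + (d+1) = i + d + 1 := by omega
      rw [e]
      omega
  intro i hi
  have low : i ≤ v i := by
    have := step 0 i (by omega)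
    rw [Nat.zero_add] at this
    omega
  have high : v i ≤ i := by
    have h1 := step i (N - 1 - i) (by omega)
    have h2 := hb (i + (N-1-i)) (by omega)
    omega
  omega

lemma IsRSFCOrdering.bijOn {ω : ℕ} {σ : ℕ → ℕ × ℕ} (h : IsRSFCOrdering ω σ) :
    Set.BijOn σ (Set.Iio (4 ^ ω)) (grid ω) := by
  cases ω with
  | zero => exact h
  | succ ω => exact h.1

lemma ncard_square (c : ℕ × ℕ) (s : ℕ) : (square c s).ncard = s * s := by
  have : square c s = ↑(Finset.Ico c.1 (c.1+s) ×ˢ Finset.Ico c.2 (c.2+s)) := by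
    ext p
    simp [square, Finset.mem_product, and_assoc]
  rw [this, Set.ncard_coe_finset, Finset.card_product, Nat.card_Ico, Nat.card_Ico]
  congr 1 <;> omega

lemma ncard_Ico_nat (a b : ℕ) : (Set.Ico a b).ncard = b - a := by
  rw [show Set.Ico a b = ↑(Finset.Ico a b) by simp, Set.ncard_coe_finset, Nat.card_Ico]

lemma cell_step {k m a : ℕ} (hd : 2^k ∣ a) (ha : a < 2^m) (hk : k ≤ m) :
    a + 2^k ≤ 2^m := by
  obtain ⟨q, rfl⟩ := hd
  have h2 : (2:ℕ)^k * 2^(m-k) = 2^m := by rw [← pow_add]; congr 1; omega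
  have hq : q < 2^(m-k) := by
    by_contra h
    push_neg at h
    have : 2^k * 2^(m-k) ≤ 2^k * q := Nat.mul_le_mul_left _ h
    omega
  have h3 : 2^k * (q+1) ≤ 2^k * 2^(m-k) := Nat.mul_le_mul_left _ hq
  rw [h2] at h3
  have h4 : 2^k * (q+1) = 2^k*q + 2^k := by ring
  omega

/-- Key structural lemma: every dyadic cell of level `k` is the image under `σ`
of a contiguous block of indices of length `4^k`. -/
lemma rsfc_blocks : ∀ (ω : ℕ) (σ : ℕ → ℕ × ℕ), IsRSFCOrdering ω σ →
    ∀ k, k ≤ ω → ∀ a b, CellCorner ω k a b →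
    ∃ n, n < 4^(ω-k) ∧ σ '' Set.Ico (n*4^k) ((n+1)*4^k) = dyadicCell k a b := by
  intro ω
  induction ω with
  | zero =>
    intro σ hσ k hk a b hab
    interval_cases k
    obtain ⟨ha, hb, -⟩ := hab
    norm_num at ha hb
    subst ha; subst hb
    refine ⟨0, by norm_num, ?_⟩
    have h1 : Set.Ico (0*4^0) ((0+1)*4^0) = Set.Iio (4^0) := by
      ext i; simp
    rw [h1, hσ.image_eq]
    ext p
    simp [grid, square, dyadicCell]
  | succ ω ih =>
    intro σ hσ k hk a b hab
    obtain ⟨hbij, c, s, hdisj, hunion, himg, hrec⟩ := hσ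
    obtain ⟨ha, hb, hda, hdb⟩ := hab
    by_cases hk1 : k = ω + 1
    · subst hk1
      have ha0 : a = 0 := by
        rcases hda with ⟨q, rfl⟩
        rcases Nat.eq_zero_or_pos q with rfl | hq
        · omega
        · nlinarith
      have hb0 : b = 0 := by
        rcases hdb with ⟨q, rfl⟩
        rcases Nat.eq_zero_or_pos q with rfl | hq
        · omega
        · nlinarith
      subst ha0; subst hb0
      refine ⟨0, by norm_num, ?_⟩
      have h1 : Set.Ico (0*4^(ω+1)) ((0+1)*4^(ω+1)) = Set.Iio (4^(ω+1)) := by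
        ext i; simp
      rw [h1, hbij.image_eq]
      ext p
      simp [grid, square, dyadicCell]
    have hkω : k ≤ ω := by omega
    -- squares are inside the grid
    have hsub : ∀ j, square (c j) s ⊆ grid (ω+1) := by
      intro j x hx
      rw [← hunion]
      exact Set.mem_iUnion.mpr ⟨j, hx⟩
    -- s = 2^ω
    have hs : s = 2^ω := by
      have hpow : (4:ℕ)^ω ≤ 4^(ω+1) := Nat.pow_le_pow_right (by norm_num) (by omega)
      have hinj : Set.InjOn σ (Set.Ico ((0:Fin 4).1 * 4^ω) (((0:Fin 4).1 + 1) * 4^ω)) := by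
        apply hbij.injOn.mono
        intro x hx
        simp only [Set.mem_Ico, Fin.val_zero] at hx
        simp only [Set.mem_Iio]
        omega
      have hcard : (σ '' Set.Ico ((0:Fin 4).1 * 4^ω) (((0:Fin 4).1 + 1) * 4^ω)).ncard = 4^ω := by
        rw [Set.ncard_image_of_injOn hinj, ncard_Ico_nat]
        show (0+1) * 4^ω - 0 * 4^ω = 4^ω
        omega
      rw [himg 0, Set.inter_eq_left.mpr (hsub 0), ncard_square] at hcard
      have h44 : (2:ℕ)^ω * 2^ω = 4^ω := by rw [← mul_pow]; norm_num
      rw [← h44] at hcard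
      exact Nat.mul_self_inj.mp hcard
    subst hs
    -- corners are 0 or 2^ω in each coordinate
    have h2pos : (0:ℕ) < 2^ω := Nat.pow_pos (by norm_num)
    have key : ∀ j, (c j).1 + 2^ω ≤ 2^(ω+1) ∧ (c j).2 + 2^ω ≤ 2^(ω+1) := by
      intro j
      have h1 : ((c j).1 + 2^ω - 1, (c j).2) ∈ square (c j) (2^ω) := by
        simp [square]; omega
      have h2 : ((c j).1, (c j).2 + 2^ω - 1) ∈ square (c j) (2^ω) := by
        simp [square]; omega
      have g1 := hsub j h1
      have g2 := hsub j h2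
      simp [grid, square] at g1 g2
      omega
    have hpe : (2:ℕ)^(ω+1) = 2^ω + 2^ω := by rw [pow_succ]; ring
    have hcorner : ∀ j, ((c j).1 = 0 ∨ (c j).1 = 2^ω) ∧ ((c j).2 = 0 ∨ (c j).2 = 2^ω) := by
      intro j
      have hkj := key j
      constructor
      · rcases Nat.eq_zero_or_pos (c j).1 with h0 | hpos
        · left; exact h0
        · right
          have hp : ((c j).1 - 1, (c j).2) ∈ grid (ω+1) := by
            simp only [grid, square, Set.mem_setOf_eq]
            refine ⟨by omega, by omega, by omega, by omega⟩
          rw [← hunion] at hp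
          obtain ⟨j', hj'⟩ := Set.mem_iUnion.mp hp
          have hne : j' ≠ j := by
            rintro rfl
            simp only [square, Set.mem_setOf_eq] at hj'
            omega
          simp only [square, Set.mem_setOf_eq] at hj'
          rcases le_or_gt ((c j').1 + 2^ω) ((c j).1) with hcase | hcase
          · omega
          · exfalso
            have hcj : (c j) ∈ square (c j') (2^ω) := by
              simp only [square, Set.mem_setOf_eq]
              refine ⟨by omega, by omega, by omega, by omega⟩
            have hcj2 : (c j) ∈ square (c j) (2^ω) := by
              simp only [square, Set.mem_setOf_eq]
              refine ⟨le_refl _, by omega, le_refl _, by omega⟩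
            exact Set.disjoint_left.mp (hdisj j' j hne) hcj hcj2
      · rcases Nat.eq_zero_or_pos (c j).2 with h0 | hpos
        · left; exact h0
        · right
          have hp : ((c j).1, (c j).2 - 1) ∈ grid (ω+1) := by
            simp only [grid, square, Set.mem_setOf_eq]
            refine ⟨by omega, by omega, by omega, by omega⟩
          rw [← hunion] at hp
          obtain ⟨j', hj'⟩ := Set.mem_iUnion.mp hp
          have hne : j' ≠ j := by
            rintro rfl
            simp only [square, Set.mem_setOf_eq] at hj'
            omega
          simp only [square, Set.mem_setOf_eq] at hj'
          rcases le_or_gt ((c j').2 + 2^ω) ((c j).2) with hcase | hcase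
          · omega
          · exfalso
            have hcj : (c j) ∈ square (c j') (2^ω) := by
              simp only [square, Set.mem_setOf_eq]
              refine ⟨by omega, by omega, by omega, by omega⟩
            have hcj2 : (c j) ∈ square (c j) (2^ω) := by
              simp only [square, Set.mem_setOf_eq]
              refine ⟨le_refl _, by omega, le_refl _, by omega⟩
            exact Set.disjoint_left.mp (hdisj j' j hne) hcj hcj2
    -- find the quadrant containing (a, b)
    have habg : (a, b) ∈ grid (ω+1) := by
      simp only [grid, square, Set.mem_setOf_eq]
      refine ⟨by omega, by omega, by omega, by omega⟩
    rw [← hunion] at habg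
    obtain ⟨j, hj⟩ := Set.mem_iUnion.mp habg
    simp only [square, Set.mem_setOf_eq] at hj
    obtain ⟨hc1, hc2⟩ := hcorner j
    have hdk : (2:ℕ)^k ∣ 2^ω := pow_dvd_pow 2 hkω
    have hdc1 : 2^k ∣ (c j).1 := by rcases hc1 with h | h <;> rw [h] <;> simp [hdk]
    have hdc2 : 2^k ∣ (c j).2 := by rcases hc2 with h | h <;> rw [h] <;> simp [hdk]
    set a' := a - (c j).1 with ha'
    set b' := b - (c j).2 with hb'
    have hcc' : CellCorner ω k a' b' := by
      refine ⟨by omega, by omega, Nat.dvd_sub hda hdc1, Nat.dvd_sub hdb hdc2⟩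
    obtain ⟨n, hn, himg'⟩ := ih _ (hrec j) k hkω a' b' hcc'
    -- translation of σ on block j
    have htrans : ∀ i, i < 4^ω → (c j).1 ≤ (σ (j.1 * 4^ω + i)).1 ∧
        (σ (j.1 * 4^ω + i)).1 < (c j).1 + 2^ω ∧
        (c j).2 ≤ (σ (j.1 * 4^ω + i)).2 ∧
        (σ (j.1 * 4^ω + i)).2 < (c j).2 + 2^ω := by
      intro i hi
      have hmem : σ (j.1 * 4^ω + i) ∈ square (c j) (2^ω) ∩ grid (ω+1) := by
        rw [← himg j]
        exact ⟨_, by simp only [Set.mem_Ico]; constructor <;> nlinarith, rfl⟩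
      have hsq := hmem.1
      simp only [square, Set.mem_setOf_eq] at hsq
      exact hsq
    have h4 : (4:ℕ)^(ω-k) * 4^k = 4^ω := by rw [← pow_add]; congr 1; omega
    have hle : (n+1) * 4^k ≤ 4^ω := by
      calc (n+1) * 4^k ≤ 4^(ω-k) * 4^k := Nat.mul_le_mul_right _ (by omega)
        _ = 4^ω := h4
    have hcell : a + 2^k ≤ (c j).1 + 2^ω ∧ b + 2^k ≤ (c j).2 + 2^ω := by
      have h1 := cell_step hcc'.2.2.1 hcc'.1 hkω
      have h2 := cell_step hcc'.2.2.2 hcc'.2.1 hkω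
      omega
    refine ⟨j.1 * 4^(ω-k) + n, ?_, ?_⟩
    · have he : (4:ℕ)^(ω+1-k) = 4 * 4^(ω-k) := by
        rw [← pow_succ']
        congr 1
        omega
      rw [he]
      have : j.1 < 4 := j.2
      nlinarith
    · have hblock : (j.1 * 4^(ω-k) + n) * 4^k = j.1 * 4^ω + n * 4^k := by
        rw [add_mul, mul_assoc, h4]
      have hblock2 : (j.1 * 4^(ω-k) + n + 1) * 4^k = j.1 * 4^ω + (n+1) * 4^k := by
        rw [add_mul, add_mul, mul_assoc, h4]
        ring
      rw [hblock, hblock2]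
      ext p
      constructor
      · rintro ⟨x, hx, rfl⟩
        simp only [Set.mem_Ico] at hx
        set i := x - j.1 * 4^ω with hi
        have hxi : x = j.1 * 4^ω + i := by omega
        have hi4 : i < 4^ω := by omega
        have hσi : ((σ (j.1 * 4^ω + i)).1 - (c j).1, (σ (j.1 * 4^ω + i)).2 - (c j).2)
            ∈ dyadicCell k a' b' := by
          rw [← himg']
          exact ⟨i, by simp only [Set.mem_Ico]; omega, rfl⟩
        simp only [dyadicCell, Set.mem_setOf_eq] at hσi ⊢
        have ht := htrans i hi4
        rw [hxi]
        omega
      · intro hp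
        simp only [dyadicCell, Set.mem_setOf_eq] at hp
        have hp' : (p.1 - (c j).1, p.2 - (c j).2) ∈ dyadicCell k a' b' := by
          simp only [dyadicCell, Set.mem_setOf_eq]
          refine ⟨by omega, by omega, by omega, by omega⟩
        rw [← himg'] at hp'
        obtain ⟨i, hi, hσi⟩ := hp'
        simp only [Set.mem_Ico] at hi
        have hi4 : i < 4^ω := by omega
        have ht := htrans i hi4
        have heq : σ (j.1 * 4^ω + i) = p := by
          have h1 := congrArg Prod.fst hσi
          have h2 := congrArg Prod.snd hσi
          simp only at h1 h2
          have : p.1 = (p.1, p.2).1 := rfl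
          ext
          · omega
          · omega
        exact ⟨j.1 * 4^ω + i, by simp only [Set.mem_Ico]; omega, heq⟩

lemma bvVal_natBits {L n : ℕ} (h : n < 2^L) : bvVal (natBits L n) = n := by
  induction L generalizing n with
  | zero => simp at h; simp [natBits, bvVal, h]
  | succ L ih =>
    have hmod : n % 2^L < 2^L := Nat.mod_lt _ (Nat.pow_pos (by norm_num))
    rw [natBits, bvVal, ih hmod, natBits_length]
    rw [pow_succ] at h
    by_cases h1 : 2^L ≤ n
    · rw [decide_eq_true h1]
      have : n % 2^L = n - 2^L := by
        rw [Nat.mod_eq_sub_mod h1, Nat.mod_eq_of_lt (by omega)]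
      simp [this]
      omega
    · rw [decide_eq_false h1]
      simp [Nat.mod_eq_of_lt (by omega : n < 2^L)]

lemma pow42 (x : ℕ) : (4:ℕ)^x = 2^(2*x) := by
  rw [show (4:ℕ) = 2^2 by norm_num, ← pow_mul]

lemma mem_grid_iff {ω : ℕ} {p : ℕ × ℕ} : p ∈ grid ω ↔ p.1 < 2^ω ∧ p.2 < 2^ω := by
  simp [grid, square]

/-- For every recursive space-filling curve ordering `σ` of the grid
`D = {0,…,2^ω−1}²` (Definition 2.1), there exists a recursive space-filling curve
map `π` on `D` (Definition 2.3) such that for all `i < j` (within the index range)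
one has `π(σ(i)) < π(σ(j))` in lexicographic order, i.e. sorting `D` by `π` recovers
`σ`.  Moreover this `π` is unique (on the cells of the quadtree). -/
theorem rsfc_ordering_to_map (ω : ℕ) (σ : ℕ → ℕ × ℕ) (hσ : IsRSFCOrdering ω σ) :
    ∃ π : ℕ → ℕ × ℕ → List Bool, IsRSFCMap ω π ∧ SortsTo ω π σ ∧
      ∀ π' : ℕ → ℕ × ℕ → List Bool, IsRSFCMap ω π' → SortsTo ω π' σ →
        ∀ ℓ, ℓ ≤ ω → ∀ a b, CellCorner ω (ω - ℓ) a b → π' ℓ (a, b) = π ℓ (a, b) := by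
  classical
  have hbij := hσ.bijOn
  set idx : ℕ × ℕ → ℕ := Function.invFunOn σ (Set.Iio (4^ω)) with hidxdef
  have hidxσ : ∀ i, i < 4^ω → idx (σ i) = i := by
    intro i hi
    exact hbij.injOn.leftInvOn_invFunOn hi
  have hidxmem : ∀ p, p ∈ grid ω → idx p < 4^ω ∧ σ (idx p) = p := by
    intro p hp
    rw [← hbij.image_eq] at hp
    obtain ⟨i, hi, rfl⟩ := hp
    rw [hidxσ i hi]
    exact ⟨hi, rfl⟩
  -- block value of a cell
  have hblockval : ∀ k, k ≤ ω → ∀ a b, CellCorner ω k a b →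
      ∀ p, p ∈ dyadicCell k a b → idx p < 4^ω ∧
        idx p / 4^k = idx (a, b) / 4^k ∧ idx p / 4^k < 4^(ω-k) := by
    intro k hk a b hcc
    obtain ⟨n, hn, himg⟩ := rsfc_blocks ω σ hσ k hk a b hcc
    have hub : (n+1) * 4^k ≤ 4^ω := by
      calc (n+1) * 4^k ≤ 4^(ω-k) * 4^k := Nat.mul_le_mul_right _ (by omega)
        _ = 4^ω := by rw [← pow_add]; congr 1; omega
    have hmain : ∀ p, p ∈ dyadicCell k a b → idx p < 4^ω ∧ idx p / 4^k = n := by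
      intro p hp
      rw [← himg] at hp
      obtain ⟨i, hi, rfl⟩ := hp
      simp only [Set.mem_Ico] at hi
      have hi4 : i < 4^ω := by omega
      rw [hidxσ i hi4]
      exact ⟨hi4, Nat.div_eq_of_lt_le (by omega) (by omega)⟩
    intro p hp
    have hcorner : (a, b) ∈ dyadicCell k a b := by
      have : (0:ℕ) < 2^k := Nat.pow_pos (by norm_num)
      simp only [dyadicCell, Set.mem_setOf_eq]
      omega
    have h1 := hmain p hp
    have h2 := hmain (a, b) hcorner
    exact ⟨h1.1, by omega, by omega⟩
  refine ⟨fun ℓ p => natBits (2*ℓ) (idx p / 4^(ω-ℓ)), ⟨?_, ?_, ?_⟩, ?_, ?_⟩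
  · -- lengths
    intro ℓ hℓ a b hcc
    exact natBits_length _ _
  · -- injectivity at a level
    intro ℓ hℓ a b a' b' hcc hcc' hne
    obtain ⟨n, hn, himg⟩ := rsfc_blocks ω σ hσ (ω-ℓ) (by omega) a b hcc
    obtain ⟨n', hn', himg'⟩ := rsfc_blocks ω σ hσ (ω-ℓ) (by omega) a' b' hcc'
    have h2k : (0:ℕ) < 2^(ω-ℓ) := Nat.pow_pos (by norm_num)
    have hcorner : (a, b) ∈ dyadicCell (ω-ℓ) a b := by
      simp only [dyadicCell, Set.mem_setOf_eq]; omega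
    have hcorner' : (a', b') ∈ dyadicCell (ω-ℓ) a' b' := by
      simp only [dyadicCell, Set.mem_setOf_eq]; omega
    have hvb := hblockval (ω-ℓ) (by omega) a b hcc (a,b) hcorner
    have hvb' := hblockval (ω-ℓ) (by omega) a' b' hcc' (a',b') hcorner'
    have hnn : n = idx (a,b) / 4^(ω-ℓ) := by
      have := hblockval (ω-ℓ) (by omega) a b hcc
      -- recompute n from himg
      have hco : (a,b) ∈ σ '' Set.Ico (n*4^(ω-ℓ)) ((n+1)*4^(ω-ℓ)) := by rw [himg]; exact hcorner
      obtain ⟨i, hi, hie⟩ := hco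
      simp only [Set.mem_Ico] at hi
      have hub : (n+1) * 4^(ω-ℓ) ≤ 4^ω := by
        calc (n+1) * 4^(ω-ℓ) ≤ 4^(ω-(ω-ℓ)) * 4^(ω-ℓ) := Nat.mul_le_mul_right _ (by omega)
          _ = 4^ω := by rw [← pow_add]; congr 1; omega
      have hi4 : i < 4^ω := by omega
      rw [← hie, hidxσ i hi4]
      exact (Nat.div_eq_of_lt_le (by omega) (by omega)).symm
    have hnn' : n' = idx (a',b') / 4^(ω-ℓ) := by
      have hco : (a',b') ∈ σ '' Set.Ico (n'*4^(ω-ℓ)) ((n'+1)*4^(ω-ℓ)) := by rw [himg']; exact hcorner'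
      obtain ⟨i, hi, hie⟩ := hco
      simp only [Set.mem_Ico] at hi
      have hub : (n'+1) * 4^(ω-ℓ) ≤ 4^ω := by
        calc (n'+1) * 4^(ω-ℓ) ≤ 4^(ω-(ω-ℓ)) * 4^(ω-ℓ) := Nat.mul_le_mul_right _ (by omega)
          _ = 4^ω := by rw [← pow_add]; congr 1; omega
      have hi4 : i < 4^ω := by omega
      rw [← hie, hidxσ i hi4]
      exact (Nat.div_eq_of_lt_le (by omega) (by omega)).symm
    have hnne : n ≠ n' := by
      rintro rfl
      have hcells : dyadicCell (ω-ℓ) a b = dyadicCell (ω-ℓ) a' b' := by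
        rw [← himg, ← himg']
      apply hne
      have m1 := hcorner
      rw [hcells] at m1
      have m2 := hcorner'
      rw [← hcells] at m2
      simp only [dyadicCell, Set.mem_setOf_eq] at m1 m2
      simp only [Prod.mk.injEq]
      omega
    show natBits (2*ℓ) (idx (a,b) / 4^(ω-ℓ)) ≠ natBits (2*ℓ) (idx (a',b') / 4^(ω-ℓ))
    intro heq
    have hℓω : ω - (ω - ℓ) = ℓ := by omega
    rw [hℓω] at hn hn'
    have hv : bvVal (natBits (2*ℓ) (idx (a,b) / 4^(ω-ℓ))) =
        bvVal (natBits (2*ℓ) (idx (a',b') / 4^(ω-ℓ))) := by rw [heq]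
    rw [bvVal_natBits (by rw [← pow42]; omega), bvVal_natBits (by rw [← pow42]; omega)] at hv
    omega
  · -- prefix property
    intro ℓ ℓ' hℓℓ' hℓ'ω a b a' b' hcc hcc' hsubset
    have hcorner' : (a', b') ∈ dyadicCell (ω-ℓ') a' b' := by
      have : (0:ℕ) < 2^(ω-ℓ') := Nat.pow_pos (by norm_num)
      simp only [dyadicCell, Set.mem_setOf_eq]; omega
    have hmem := hsubset hcorner'
    have hv := hblockval (ω-ℓ) (by omega) a b hcc (a', b') hmem
    have hi4 : idx (a', b') < 4^ω := hv.1
    have hkey : idx (a, b) / 4^(ω-ℓ) = (idx (a', b') / 4^(ω-ℓ')) / 4^(ℓ'-ℓ) := by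
      rw [Nat.div_div_eq_div_mul, ← pow_add]
      rw [show ω - ℓ' + (ℓ' - ℓ) = ω - ℓ by omega]
      omega
    show natBits (2*ℓ) (idx (a,b) / 4^(ω-ℓ)) <+: natBits (2*ℓ') (idx (a',b') / 4^(ω-ℓ'))
    rw [hkey]
    have hN' : idx (a', b') / 4^(ω-ℓ') < 2^(2*ℓ') := by
      rw [Nat.div_lt_iff_lt_mul (Nat.pow_pos (by norm_num)), ← pow42, ← pow_add]
      calc idx (a',b') < 4^ω := hi4
        _ ≤ 4^(ℓ' + (ω - ℓ')) := by apply Nat.pow_le_pow_right <;> omega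
    have h2ℓ' : 2*ℓ' = 2*ℓ + 2*(ℓ'-ℓ) := by omega
    have hp := natBits_prefix (L := 2*ℓ) (δ := 2*(ℓ'-ℓ)) (n := idx (a', b') / 4^(ω-ℓ'))
      (by rw [← h2ℓ']; exact hN')
    rw [← pow42] at hp
    rw [← h2ℓ'] at hp
    exact hp
  · -- SortsTo
    intro i j hij hj
    show List.Lex (· < ·) (natBits (2*ω) (idx (σ i) / 4^(ω-ω)))
      (natBits (2*ω) (idx (σ j) / 4^(ω-ω)))
    have h1 : ∀ m, m < 4^ω → idx (σ m) / 4^(ω-ω) = m := by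
      intro m hm
      rw [hidxσ m hm]
      simp
    rw [h1 i (by omega), h1 j hj]
    exact natBits_lex hij (by rw [← pow42]; exact hj)
  · -- uniqueness
    intro π' hmap' hsort' ℓ hℓ a b hcc
    show π' ℓ (a, b) = natBits (2*ℓ) (idx (a,b) / 4^(ω-ℓ))
    obtain ⟨hlen', hinj', hpre'⟩ := hmap'
    have hgridcc : ∀ p : ℕ × ℕ, p ∈ grid ω → CellCorner ω (ω - ω) p.1 p.2 := by
      intro p hp
      rw [mem_grid_iff] at hp
      refine ⟨hp.1, hp.2, ?_, ?_⟩ <;> simp [Nat.sub_self]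
    -- step 1: π' at the finest level agrees with natBits
    have hstep1 : ∀ i, i < 4^ω → π' ω (σ i) = natBits (2*ω) i := by
      have hlenσ : ∀ i, i < 4^ω → (π' ω (σ i)).length = 2*ω := by
        intro i hi
        have hg : σ i ∈ grid ω := hbij.mapsTo hi
        have := hlen' ω (le_refl ω) (σ i).1 (σ i).2 (hgridcc _ hg)
        simpa using this
      have hmono : ∀ i j, i < j → j < 4^ω →
          bvVal (π' ω (σ i)) < bvVal (π' ω (σ j)) := by
        intro i j hij hj
        exact bvVal_lt_of_lex (by rw [hlenσ i (by omega), hlenσ j hj]) (hsort' i j hij hj)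
      have hbound : ∀ i, i < 4^ω → bvVal (π' ω (σ i)) < 4^ω := by
        intro i hi
        have := bvVal_lt (π' ω (σ i))
        rw [hlenσ i hi, ← pow42] at this
        exact this
      have hfix := strict_mono_fix hmono hbound
      intro i hi
      have h1 : natBits (π' ω (σ i)).length (bvVal (π' ω (σ i))) = π' ω (σ i) :=
        natBits_bvVal _
      rw [hlenσ i hi, hfix i hi] at h1
      exact h1.symm
    -- step 2: at the finest level π' = π on the grid
    have hstep2 : ∀ p : ℕ × ℕ, p ∈ grid ω →
        π' ω p = natBits (2*ω) (idx p / 4^(ω-ω)) := by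
      intro p hp
      obtain ⟨hi4, hσi⟩ := hidxmem p hp
      have := hstep1 (idx p) hi4
      rw [hσi] at this
      rw [this]
      congr 1
      simp
    -- step 3: general level via prefixes
    have habg : (a, b) ∈ grid ω := by
      rw [mem_grid_iff]
      exact ⟨hcc.1, hcc.2.1⟩
    have hcc0 : CellCorner ω (ω - ω) a b := hgridcc (a,b) habg
    have hsub0 : dyadicCell (ω - ω) a b ⊆ dyadicCell (ω - ℓ) a b := by
      intro p hp
      have h1 : (0:ℕ) < 2^(ω-ℓ) := Nat.pow_pos (by norm_num)
      simp only [dyadicCell, Set.mem_setOf_eq, Nat.sub_self, pow_zero] at hp ⊢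
      omega
    have hpre1 := hpre' ℓ ω hℓ (le_refl ω) a b a b hcc hcc0 hsub0
    -- π's own prefix fact
    have hmemc : (a, b) ∈ dyadicCell (ω - ℓ) a b := hsub0 (by
      have : (0:ℕ) < 2^(ω-ω) := Nat.pow_pos (by norm_num)
      simp only [dyadicCell, Set.mem_setOf_eq]; omega)
    have hv := hblockval (ω-ℓ) (by omega) a b hcc (a, b) hmemc
    have hkey : idx (a, b) / 4^(ω-ℓ) = (idx (a, b) / 4^(ω-ω)) / 4^(ω-ℓ) := by
      rw [Nat.sub_self, pow_zero, Nat.div_one]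
    have hN : idx (a,b) / 4^(ω-ω) < 2^(2*ω) := by
      rw [Nat.sub_self, pow_zero, Nat.div_one, ← pow42]
      exact hv.1
    have hpre2 : natBits (2*ℓ) (idx (a,b) / 4^(ω-ℓ)) <+:
        natBits (2*ω) (idx (a,b) / 4^(ω-ω)) := by
      have h2ω : 2*ω = 2*ℓ + 2*(ω-ℓ) := by omega
      have hp := natBits_prefix (L := 2*ℓ) (δ := 2*(ω-ℓ)) (n := idx (a,b) / 4^(ω-ω))
        (by rw [← h2ω]; exact hN)
      rw [← pow42] at hp
      rw [← h2ω] at hp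
      rw [hkey]
      exact hp
    -- combine: both are length-2ℓ prefixes of the same string
    rw [hstep2 (a,b) habg] at hpre1
    have e1 : π' ℓ (a, b) = (natBits (2*ω) (idx (a,b) / 4^(ω-ω))).take (π' ℓ (a,b)).length :=
      List.prefix_iff_eq_take.mp hpre1
    have e2 : natBits (2*ℓ) (idx (a,b) / 4^(ω-ℓ)) =
        (natBits (2*ω) (idx (a,b) / 4^(ω-ω))).take (natBits (2*ℓ) (idx (a,b) / 4^(ω-ℓ))).length :=
      List.prefix_iff_eq_take.mp hpre2
    rw [hlen' ℓ hℓ a b hcc] at e1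
    rw [natBits_length] at e2
    rw [e1, e2]
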